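/- arXiv:1404.7822 — 3 statements merged into one kernel-verified Lean document; each statement's English description precedes it below -/
import Mathlib

section
/- There exists t ∈ su(4) such that t and t' = S t S generate su(4) as a real Lie algebra, i.e. the smallest Lie subalgebra of su(4) containing t and t' equals su(4). -/
open Matrix Complex

theorem vecCons_eq_iff {α : Type*} {n : ℕ} (a b : α) (u v : Fin n → α) :
    vecCons a u = vecCons b v ↔ a = b ∧ u = v := Fin.cons_inj

theorem mul_fin_four' {α : Type*} [NonUnitalNonAssocSemiring α]
    (a₁₁ a₁₂ a₁₃ a₁₄ a₂₁ a₂₂ a₂₃ a₂₄ a₃₁ a₃₂ a₃₃ a₃₄ a₄₁ a₄₂ a₄₃ a₄₄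
     b₁₁ b₁₂ b₁₃ b₁₄ b₂₁ b₂₂ b₂₃ b₂₄ b₃₁ b₃₂ b₃₃ b₃₄ b₄₁ b₄₂ b₄₃ b₄₄ : α) :
    !![a₁₁,a₁₂,a₁₃,a₁₄; a₂₁,a₂₂,a₂₃,a₂₄; a₃₁,a₃₂,a₃₃,a₃₄; a₄₁,a₄₂,a₄₃,a₄₄] *
    !![b₁₁,b₁₂,b₁₃,b₁₄; b₂₁,b₂₂,b₂₃,b₂₄; b₃₁,b₃₂,b₃₃,b₃₄; b₄₁,b₄₂,b₄₃,b₄₄] =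
    !![a₁₁*b₁₁+a₁₂*b₂₁+a₁₃*b₃₁+a₁₄*b₄₁, a₁₁*b₁₂+a₁₂*b₂₂+a₁₃*b₃₂+a₁₄*b₄₂,
       a₁₁*b₁₃+a₁₂*b₂₃+a₁₃*b₃₃+a₁₄*b₄₃, a₁₁*b₁₄+a₁₂*b₂₄+a₁₃*b₃₄+a₁₄*b₄₄;
       a₂₁*b₁₁+a₂₂*b₂₁+a₂₃*b₃₁+a₂₄*b₄₁, a₂₁*b₁₂+a₂₂*b₂₂+a₂₃*b₃₂+a₂₄*b₄₂,
       a₂₁*b₁₃+a₂₂*b₂₃+a₂₃*b₃₃+a₂₄*b₄₃, a₂₁*b₁₄+a₂₂*b₂₄+a₂₃*b₃₄+a₂₄*b₄₄;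
       a₃₁*b₁₁+a₃₂*b₂₁+a₃₃*b₃₁+a₃₄*b₄₁, a₃₁*b₁₂+a₃₂*b₂₂+a₃₃*b₃₂+a₃₄*b₄₂,
       a₃₁*b₁₃+a₃₂*b₂₃+a₃₃*b₃₃+a₃₄*b₄₃, a₃₁*b₁₄+a₃₂*b₂₄+a₃₃*b₃₄+a₃₄*b₄₄;
       a₄₁*b₁₁+a₄₂*b₂₁+a₄₃*b₃₁+a₄₄*b₄₁, a₄₁*b₁₂+a₄₂*b₂₂+a₄₃*b₃₂+a₄₄*b₄₂,
       a₄₁*b₁₃+a₄₂*b₂₃+a₄₃*b₃₃+a₄₄*b₄₃, a₄₁*b₁₄+a₄₂*b₂₄+a₄₃*b₃₄+a₄₄*b₄₄] := by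
  ext i j
  fin_cases i <;> fin_cases j <;> simp [Matrix.mul_apply, Fin.sum_univ_four]

theorem sub_fin_four' {α : Type*} [SubtractionMonoid α]
    (a₁₁ a₁₂ a₁₃ a₁₄ a₂₁ a₂₂ a₂₃ a₂₄ a₃₁ a₃₂ a₃₃ a₃₄ a₄₁ a₄₂ a₄₃ a₄₄
     b₁₁ b₁₂ b₁₃ b₁₄ b₂₁ b₂₂ b₂₃ b₂₄ b₃₁ b₃₂ b₃₃ b₃₄ b₄₁ b₄₂ b₄₃ b₄₄ : α) :
    !![a₁₁,a₁₂,a₁₃,a₁₄; a₂₁,a₂₂,a₂₃,a₂₄; a₃₁,a₃₂,a₃₃,a₃₄; a₄₁,a₄₂,a₄₃,a₄₄] -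
    !![b₁₁,b₁₂,b₁₃,b₁₄; b₂₁,b₂₂,b₂₃,b₂₄; b₃₁,b₃₂,b₃₃,b₃₄; b₄₁,b₄₂,b₄₃,b₄₄] =
    !![a₁₁-b₁₁,a₁₂-b₁₂,a₁₃-b₁₃,a₁₄-b₁₄; a₂₁-b₂₁,a₂₂-b₂₂,a₂₃-b₂₃,a₂₄-b₂₄;
       a₃₁-b₃₁,a₃₂-b₃₂,a₃₃-b₃₃,a₃₄-b₃₄; a₄₁-b₄₁,a₄₂-b₄₂,a₄₃-b₄₃,a₄₄-b₄₄] := by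
  ext i j
  fin_cases i <;> fin_cases j <;> simp

theorem add_fin_four' {α : Type*} [AddMonoid α]
    (a₁₁ a₁₂ a₁₃ a₁₄ a₂₁ a₂₂ a₂₃ a₂₄ a₃₁ a₃₂ a₃₃ a₃₄ a₄₁ a₄₂ a₄₃ a₄₄
     b₁₁ b₁₂ b₁₃ b₁₄ b₂₁ b₂₂ b₂₃ b₂₄ b₃₁ b₃₂ b₃₃ b₃₄ b₄₁ b₄₂ b₄₃ b₄₄ : α) :
    !![a₁₁,a₁₂,a₁₃,a₁₄; a₂₁,a₂₂,a₂₃,a₂₄; a₃₁,a₃₂,a₃₃,a₃₄; a₄₁,a₄₂,a₄₃,a₄₄] +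
    !![b₁₁,b₁₂,b₁₃,b₁₄; b₂₁,b₂₂,b₂₃,b₂₄; b₃₁,b₃₂,b₃₃,b₃₄; b₄₁,b₄₂,b₄₃,b₄₄] =
    !![a₁₁+b₁₁,a₁₂+b₁₂,a₁₃+b₁₃,a₁₄+b₁₄; a₂₁+b₂₁,a₂₂+b₂₂,a₂₃+b₂₃,a₂₄+b₂₄;
       a₃₁+b₃₁,a₃₂+b₃₂,a₃₃+b₃₃,a₃₄+b₃₄; a₄₁+b₄₁,a₄₂+b₄₂,a₄₃+b₄₃,a₄₄+b₄₄] := by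
  ext i j
  fin_cases i <;> fin_cases j <;> simp

theorem smul_fin_four' {R α : Type*} [SMul R α] (c : R)
    (a₁₁ a₁₂ a₁₃ a₁₄ a₂₁ a₂₂ a₂₃ a₂₄ a₃₁ a₃₂ a₃₃ a₃₄ a₄₁ a₄₂ a₄₃ a₄₄ : α) :
    c • !![a₁₁,a₁₂,a₁₃,a₁₄; a₂₁,a₂₂,a₂₃,a₂₄; a₃₁,a₃₂,a₃₃,a₃₄; a₄₁,a₄₂,a₄₃,a₄₄] =
    !![c•a₁₁,c•a₁₂,c•a₁₃,c•a₁₄; c•a₂₁,c•a₂₂,c•a₂₃,c•a₂₄;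
       c•a₃₁,c•a₃₂,c•a₃₃,c•a₃₄; c•a₄₁,c•a₄₂,c•a₄₃,c•a₄₄] := by
  ext i j
  fin_cases i <;> fin_cases j <;> simp

theorem trace_fin_four' {α : Type*} [AddCommMonoid α] (A : Matrix (Fin 4) (Fin 4) α) :
    A.trace = A 0 0 + A 1 1 + A 2 2 + A 3 3 := by
  simp [Matrix.trace, Fin.sum_univ_four, Matrix.diag, add_assoc]

noncomputable def gm0 : Matrix (Fin 4) (Fin 4) ℂ :=
  !![I, 1, 0, 0; -1, 2*I, I, 0; 0, I, -1*I, (1+1*I); 0, 0, (-1+1*I), -2*I]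

noncomputable def gm1 : Matrix (Fin 4) (Fin 4) ℂ :=
  !![I, 0, 1, 0; 0, -1*I, I, (1+1*I); -1, I, 2*I, 0; 0, (-1+1*I), 0, -2*I]

noncomputable def gm2 : Matrix (Fin 4) (Fin 4) ℂ :=
  !![0, -3*I, 3*I, 0; -3*I, 0, -5, (-3+3*I); 3*I, 5, 0, (3+-3*I); 0, (3+3*I), (-3+-3*I), 0]

noncomputable def gm3 : Matrix (Fin 4) (Fin 4) ℂ :=
  !![-6*I, 0, -14, 0; 0, 16*I, -12*I, (-4+-4*I); 14, -12*I, -22*I, 0; 0, (4+-4*I), 0, 12*I]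

noncomputable def gm4 : Matrix (Fin 4) (Fin 4) ℂ :=
  !![6*I, 14, 0, 0; -14, 22*I, 12*I, 0; 0, 12*I, -16*I, (4+4*I); 0, 0, (-4+4*I), -12*I]

noncomputable def gm5 : Matrix (Fin 4) (Fin 4) ℂ :=
  !![0, 36*I, -40*I, (10+10*I); 36*I, 0, 80, (4+-4*I); -40*I, -80, 0, (-30+30*I); (-10+10*I), (-4+-4*I), (30+30*I), 0]

noncomputable def gm6 : Matrix (Fin 4) (Fin 4) ℂ :=
  !![0, 2*I, -2*I, 0; 2*I, 0, 2, (8+-8*I); -2*I, -2, 0, (-8+8*I); 0, (-8+-8*I), (8+8*I), 0]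

noncomputable def gm7 : Matrix (Fin 4) (Fin 4) ℂ :=
  !![0, 40*I, -36*I, (-10+-10*I); 40*I, 0, 80, (30+-30*I); -36*I, -80, 0, (-4+4*I); (10+-10*I), (-30+-30*I), (4+4*I), 0]

noncomputable def gm8 : Matrix (Fin 4) (Fin 4) ℂ :=
  !![84*I, 172, 12, (30+-30*I); -172, 168*I, 208*I, (48+48*I); -12, 208*I, -204*I, (46+46*I); (-30+-30*I), (-48+48*I), (-46+46*I), -48*I]

noncomputable def gm9 : Matrix (Fin 4) (Fin 4) ℂ :=
  !![84*I, 12, 172, (30+-30*I); -12, -204*I, 208*I, (46+46*I); -172, 208*I, 168*I, (48+48*I); (-30+-30*I), (-46+46*I), (-48+48*I), -48*I]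

noncomputable def gm10 : Matrix (Fin 4) (Fin 4) ℂ :=
  !![72*I, -4, 216, (-66+66*I); 4, -232*I, 272*I, (-104+-104*I); -216, 272*I, 280*I, (-26+-26*I); (66+66*I), (104+-104*I), (26+-26*I), -120*I]

noncomputable def gm11 : Matrix (Fin 4) (Fin 4) ℂ :=
  !![4*I, 0, 8, (6+-6*I); 0, -8*I, -8*I, (22+22*I); -8, -8*I, 36*I, 0; (-6+-6*I), (-22+22*I), 0, -32*I]

noncomputable def gm12 : Matrix (Fin 4) (Fin 4) ℂ :=
  !![0, -100*I, 0, (126+126*I); -100*I, 0, -168, (-60+60*I); 0, 168, 0, (-250+250*I); (-126+126*I), (60+60*I), (250+250*I), 0]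

noncomputable def gm13 : Matrix (Fin 4) (Fin 4) ℂ :=
  !![0, -472*I, 480*I, (-36+-36*I); -472*I, 0, -1076, (-54+54*I); 480*I, 1076, 0, (122+-122*I); (36+-36*I), (54+54*I), (-122+-122*I), 0]

noncomputable def gm14 : Matrix (Fin 4) (Fin 4) ℂ :=
  !![960*I, -612, 2528, (486+-486*I); 612, -3688*I, 2352*I, (-296+-296*I); -2528, 2352*I, 2704*I, (1422+1422*I); (-486+-486*I), (296+-296*I), (-1422+1422*I), 24*I]

set_option maxHeartbeats 1000000 in
theorem hbr2 : ⁅gm0, gm1⁆ = gm2 := by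
  show gm0 * gm1 - gm1 * gm0 = gm2
  rw [gm0, gm1, gm2, mul_fin_four', mul_fin_four', sub_fin_four']
  norm_num [vecCons_eq_iff, Complex.ext_iff]

set_option maxHeartbeats 1000000 in
theorem hbr3 : ⁅gm0, gm2⁆ = gm3 := by
  show gm0 * gm2 - gm2 * gm0 = gm3
  rw [gm0, gm2, gm3, mul_fin_four', mul_fin_four', sub_fin_four']
  norm_num [vecCons_eq_iff, Complex.ext_iff]

set_option maxHeartbeats 1000000 in
theorem hbr4 : ⁅gm1, gm2⁆ = gm4 := by
  show gm1 * gm2 - gm2 * gm1 = gm4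
  rw [gm1, gm2, gm4, mul_fin_four', mul_fin_four', sub_fin_four']
  norm_num [vecCons_eq_iff, Complex.ext_iff]

set_option maxHeartbeats 1000000 in
theorem hbr5 : ⁅gm0, gm3⁆ = gm5 := by
  show gm0 * gm3 - gm3 * gm0 = gm5
  rw [gm0, gm3, gm5, mul_fin_four', mul_fin_four', sub_fin_four']
  norm_num [vecCons_eq_iff, Complex.ext_iff]

set_option maxHeartbeats 1000000 in
theorem hbr6 : ⁅gm0, gm4⁆ = gm6 := by
  show gm0 * gm4 - gm4 * gm0 = gm6
  rw [gm0, gm4, gm6, mul_fin_four', mul_fin_four', sub_fin_four']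
  norm_num [vecCons_eq_iff, Complex.ext_iff]

set_option maxHeartbeats 1000000 in
theorem hbr7 : ⁅gm1, gm4⁆ = gm7 := by
  show gm1 * gm4 - gm4 * gm1 = gm7
  rw [gm1, gm4, gm7, mul_fin_four', mul_fin_four', sub_fin_four']
  norm_num [vecCons_eq_iff, Complex.ext_iff]

set_option maxHeartbeats 1000000 in
theorem hbr8 : ⁅gm2, gm3⁆ = gm8 := by
  show gm2 * gm3 - gm3 * gm2 = gm8
  rw [gm2, gm3, gm8, mul_fin_four', mul_fin_four', sub_fin_four']
  norm_num [vecCons_eq_iff, Complex.ext_iff]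

set_option maxHeartbeats 1000000 in
theorem hbr9 : ⁅gm2, gm4⁆ = gm9 := by
  show gm2 * gm4 - gm4 * gm2 = gm9
  rw [gm2, gm4, gm9, mul_fin_four', mul_fin_four', sub_fin_four']
  norm_num [vecCons_eq_iff, Complex.ext_iff]

set_option maxHeartbeats 1000000 in
theorem hbr10 : ⁅gm0, gm5⁆ = gm10 := by
  show gm0 * gm5 - gm5 * gm0 = gm10
  rw [gm0, gm5, gm10, mul_fin_four', mul_fin_four', sub_fin_four']
  norm_num [vecCons_eq_iff, Complex.ext_iff]

set_option maxHeartbeats 1000000 in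
theorem hbr11 : ⁅gm0, gm6⁆ = gm11 := by
  show gm0 * gm6 - gm6 * gm0 = gm11
  rw [gm0, gm6, gm11, mul_fin_four', mul_fin_four', sub_fin_four']
  norm_num [vecCons_eq_iff, Complex.ext_iff]

set_option maxHeartbeats 1000000 in
theorem hbr12 : ⁅gm0, gm8⁆ = gm12 := by
  show gm0 * gm8 - gm8 * gm0 = gm12
  rw [gm0, gm8, gm12, mul_fin_four', mul_fin_four', sub_fin_four']
  norm_num [vecCons_eq_iff, Complex.ext_iff]

set_option maxHeartbeats 1000000 in
theorem hbr13 : ⁅gm0, gm9⁆ = gm13 := by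
  show gm0 * gm9 - gm9 * gm0 = gm13
  rw [gm0, gm9, gm13, mul_fin_four', mul_fin_four', sub_fin_four']
  norm_num [vecCons_eq_iff, Complex.ext_iff]

set_option maxHeartbeats 1000000 in
theorem hbr14 : ⁅gm2, gm8⁆ = gm14 := by
  show gm2 * gm8 - gm8 * gm2 = gm14
  rw [gm2, gm8, gm14, mul_fin_four', mul_fin_four', sub_fin_four']
  norm_num [vecCons_eq_iff, Complex.ext_iff]

noncomputable def GA01 : Matrix (Fin 4) (Fin 4) ℂ :=
  !![0, 1, 0, 0; -1, 0, 0, 0; 0, 0, 0, 0; 0, 0, 0, 0]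

noncomputable def GB01 : Matrix (Fin 4) (Fin 4) ℂ :=
  !![0, I, 0, 0; I, 0, 0, 0; 0, 0, 0, 0; 0, 0, 0, 0]

noncomputable def GA02 : Matrix (Fin 4) (Fin 4) ℂ :=
  !![0, 0, 1, 0; 0, 0, 0, 0; -1, 0, 0, 0; 0, 0, 0, 0]

noncomputable def GB02 : Matrix (Fin 4) (Fin 4) ℂ :=
  !![0, 0, I, 0; 0, 0, 0, 0; I, 0, 0, 0; 0, 0, 0, 0]

noncomputable def GA03 : Matrix (Fin 4) (Fin 4) ℂ :=
  !![0, 0, 0, 1; 0, 0, 0, 0; 0, 0, 0, 0; -1, 0, 0, 0]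

noncomputable def GB03 : Matrix (Fin 4) (Fin 4) ℂ :=
  !![0, 0, 0, I; 0, 0, 0, 0; 0, 0, 0, 0; I, 0, 0, 0]

noncomputable def GA12 : Matrix (Fin 4) (Fin 4) ℂ :=
  !![0, 0, 0, 0; 0, 0, 1, 0; 0, -1, 0, 0; 0, 0, 0, 0]

noncomputable def GB12 : Matrix (Fin 4) (Fin 4) ℂ :=
  !![0, 0, 0, 0; 0, 0, I, 0; 0, I, 0, 0; 0, 0, 0, 0]

noncomputable def GA13 : Matrix (Fin 4) (Fin 4) ℂ :=
  !![0, 0, 0, 0; 0, 0, 0, 1; 0, 0, 0, 0; 0, -1, 0, 0]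

noncomputable def GB13 : Matrix (Fin 4) (Fin 4) ℂ :=
  !![0, 0, 0, 0; 0, 0, 0, I; 0, 0, 0, 0; 0, I, 0, 0]

noncomputable def GA23 : Matrix (Fin 4) (Fin 4) ℂ :=
  !![0, 0, 0, 0; 0, 0, 0, 0; 0, 0, 0, 1; 0, 0, -1, 0]

noncomputable def GB23 : Matrix (Fin 4) (Fin 4) ℂ :=
  !![0, 0, 0, 0; 0, 0, 0, 0; 0, 0, 0, I; 0, 0, I, 0]

noncomputable def GD0 : Matrix (Fin 4) (Fin 4) ℂ :=
  !![I, 0, 0, 0; 0, 0, 0, 0; 0, 0, 0, 0; 0, 0, 0, -1*I]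

noncomputable def GD1 : Matrix (Fin 4) (Fin 4) ℂ :=
  !![0, 0, 0, 0; 0, I, 0, 0; 0, 0, 0, 0; 0, 0, 0, -1*I]

noncomputable def GD2 : Matrix (Fin 4) (Fin 4) ℂ :=
  !![0, 0, 0, 0; 0, 0, 0, 0; 0, 0, I, 0; 0, 0, 0, -1*I]

set_option maxHeartbeats 4000000 in
theorem hcombA01 : GA01 = (((58/27) : ℝ)) • gm0 + (((-85/27) : ℝ)) • gm1 + (((-37/36) : ℝ)) • gm3 + (((-4/9) : ℝ)) • gm4 + (((7/216) : ℝ)) • gm8 + (((-5/108) : ℝ)) • gm9 + (((-1/72) : ℝ)) • gm10 + (((-1/12) : ℝ)) • gm11 := by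
  rw [GA01, gm0, gm1, gm3, gm4, gm8, gm9, gm10, gm11]
  simp only [smul_fin_four', add_fin_four']
  norm_num [vecCons_eq_iff, Complex.ext_iff, Complex.real_smul]

set_option maxHeartbeats 4000000 in
theorem hcombB01 : GB01 = (((-1109/432) : ℝ)) • gm2 + (((-13/144) : ℝ)) • gm5 + (((-29/288) : ℝ)) • gm6 + (((-5/18) : ℝ)) • gm7 + (((-1/54) : ℝ)) • gm12 + (((-11/864) : ℝ)) • gm13 := by
  rw [GB01, gm2, gm5, gm6, gm7, gm12, gm13]
  simp only [smul_fin_four', add_fin_four']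
  norm_num [vecCons_eq_iff, Complex.ext_iff, Complex.real_smul]

set_option maxHeartbeats 4000000 in
theorem hcombA02 : GA02 = (((-53/36) : ℝ)) • gm0 + (((17/36) : ℝ)) • gm1 + (((-11/72) : ℝ)) • gm3 + (((31/72) : ℝ)) • gm4 + (((-1/36) : ℝ)) • gm8 + (((1/72) : ℝ)) • gm9 + (((-1/72) : ℝ)) • gm10 + (((-1/12) : ℝ)) • gm11 := by
  rw [GA02, gm0, gm1, gm3, gm4, gm8, gm9, gm10, gm11]
  simp only [smul_fin_four', add_fin_four']
  norm_num [vecCons_eq_iff, Complex.ext_iff, Complex.real_smul]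

set_option maxHeartbeats 4000000 in
theorem hcombB02 : GB02 = (((103/432) : ℝ)) • gm2 + (((-5/432) : ℝ)) • gm5 + (((533/864) : ℝ)) • gm6 + (((-43/216) : ℝ)) • gm7 + (((-1/54) : ℝ)) • gm12 + (((-11/864) : ℝ)) • gm13 := by
  rw [GB02, gm2, gm5, gm6, gm7, gm12, gm13]
  simp only [smul_fin_four', add_fin_four']
  norm_num [vecCons_eq_iff, Complex.ext_iff, Complex.real_smul]

set_option maxHeartbeats 4000000 in
theorem hcombA03 : GA03 = (((-34631/5832) : ℝ)) • gm0 + (((32687/5832) : ℝ)) • gm1 + (((-1795/864) : ℝ)) • gm2 + (((917/1296) : ℝ)) • gm3 + (((217/432) : ℝ)) • gm4 + (((-137/288) : ℝ)) • gm5 + (((197/576) : ℝ)) • gm6 + (((-23/72) : ℝ)) • gm7 + (((199/11664) : ℝ)) • gm8 + (((-437/5832) : ℝ)) • gm9 + (((13/864) : ℝ)) • gm10 + (((19/144) : ℝ)) • gm11 + (((1/432) : ℝ)) • gm12 + (((-85/1728) : ℝ)) • gm13 + (((13/2592) : ℝ)) • gm14 := by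
  rw [GA03, gm0, gm1, gm2, gm3, gm4, gm5, gm6, gm7, gm8, gm9, gm10, gm11, gm12, gm13, gm14]
  simp only [smul_fin_four', add_fin_four']
  norm_num [vecCons_eq_iff, Complex.ext_iff, Complex.real_smul]

set_option maxHeartbeats 4000000 in
theorem hcombB03 : GB03 = (((34631/5832) : ℝ)) • gm0 + (((-32687/5832) : ℝ)) • gm1 + (((-1795/864) : ℝ)) • gm2 + (((-917/1296) : ℝ)) • gm3 + (((-217/432) : ℝ)) • gm4 + (((-137/288) : ℝ)) • gm5 + (((197/576) : ℝ)) • gm6 + (((-23/72) : ℝ)) • gm7 + (((-199/11664) : ℝ)) • gm8 + (((437/5832) : ℝ)) • gm9 + (((-13/864) : ℝ)) • gm10 + (((-19/144) : ℝ)) • gm11 + (((1/432) : ℝ)) • gm12 + (((-85/1728) : ℝ)) • gm13 + (((-13/2592) : ℝ)) • gm14 := by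
  rw [GB03, gm0, gm1, gm2, gm3, gm4, gm5, gm6, gm7, gm8, gm9, gm10, gm11, gm12, gm13, gm14]
  simp only [smul_fin_four', add_fin_four']
  norm_num [vecCons_eq_iff, Complex.ext_iff, Complex.real_smul]

set_option maxHeartbeats 4000000 in
theorem hcombA12 : GA12 = (((5/4) : ℝ)) • gm2 + (((1/24) : ℝ)) • gm5 + (((7/24) : ℝ)) • gm6 + (((1/24) : ℝ)) • gm7 := by
  rw [GA12, gm2, gm5, gm6, gm7]
  simp only [smul_fin_four', add_fin_four']
  norm_num [vecCons_eq_iff, Complex.ext_iff, Complex.real_smul]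

set_option maxHeartbeats 4000000 in
theorem hcombB12 : GB12 = (((1627/1701) : ℝ)) • gm0 + (((-898/1701) : ℝ)) • gm1 + (((215/378) : ℝ)) • gm3 + (((-5/84) : ℝ)) • gm4 + (((-67/6804) : ℝ)) • gm8 + (((701/13608) : ℝ)) • gm9 + (((5/336) : ℝ)) • gm10 + (((5/56) : ℝ)) • gm11 + (((-5/3024) : ℝ)) • gm14 := by
  rw [GB12, gm0, gm1, gm3, gm4, gm8, gm9, gm10, gm11, gm14]
  simp only [smul_fin_four', add_fin_four']
  norm_num [vecCons_eq_iff, Complex.ext_iff, Complex.real_smul]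

set_option maxHeartbeats 4000000 in
theorem hcombA13 : GA13 = (((10687/4536) : ℝ)) • gm0 + (((-10039/4536) : ℝ)) • gm1 + (((-529/864) : ℝ)) • gm2 + (((-47/336) : ℝ)) • gm3 + (((-167/1008) : ℝ)) • gm4 + (((-161/864) : ℝ)) • gm5 + (((293/1728) : ℝ)) • gm6 + (((-5/54) : ℝ)) • gm7 + (((-113/9072) : ℝ)) • gm8 + (((107/2268) : ℝ)) • gm9 + (((-11/2016) : ℝ)) • gm10 + (((-11/336) : ℝ)) • gm11 + (((1/432) : ℝ)) • gm12 + (((-31/1728) : ℝ)) • gm13 + (((-5/2016) : ℝ)) • gm14 := by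
  rw [GA13, gm0, gm1, gm2, gm3, gm4, gm5, gm6, gm7, gm8, gm9, gm10, gm11, gm12, gm13, gm14]
  simp only [smul_fin_four', add_fin_four']
  norm_num [vecCons_eq_iff, Complex.ext_iff, Complex.real_smul]

set_option maxHeartbeats 4000000 in
theorem hcombB13 : GB13 = (((10687/4536) : ℝ)) • gm0 + (((-10039/4536) : ℝ)) • gm1 + (((529/864) : ℝ)) • gm2 + (((-47/336) : ℝ)) • gm3 + (((-167/1008) : ℝ)) • gm4 + (((161/864) : ℝ)) • gm5 + (((-293/1728) : ℝ)) • gm6 + (((5/54) : ℝ)) • gm7 + (((-113/9072) : ℝ)) • gm8 + (((107/2268) : ℝ)) • gm9 + (((-11/2016) : ℝ)) • gm10 + (((-11/336) : ℝ)) • gm11 + (((-1/432) : ℝ)) • gm12 + (((31/1728) : ℝ)) • gm13 + (((-5/2016) : ℝ)) • gm14 := by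
  rw [GB13, gm0, gm1, gm2, gm3, gm4, gm5, gm6, gm7, gm8, gm9, gm10, gm11, gm12, gm13, gm14]
  simp only [smul_fin_four', add_fin_four']
  norm_num [vecCons_eq_iff, Complex.ext_iff, Complex.real_smul]

set_option maxHeartbeats 4000000 in
theorem hcombA23 : GA23 = (((15265/4536) : ℝ)) • gm0 + (((-14617/4536) : ℝ)) • gm1 + (((-697/864) : ℝ)) • gm2 + (((-89/336) : ℝ)) • gm3 + (((-293/1008) : ℝ)) • gm4 + (((-55/288) : ℝ)) • gm5 + (((31/576) : ℝ)) • gm6 + (((-7/72) : ℝ)) • gm7 + (((-71/9072) : ℝ)) • gm8 + (((193/4536) : ℝ)) • gm9 + (((-11/2016) : ℝ)) • gm10 + (((-11/336) : ℝ)) • gm11 + (((1/432) : ℝ)) • gm12 + (((-31/1728) : ℝ)) • gm13 + (((-5/2016) : ℝ)) • gm14 := by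
  rw [GA23, gm0, gm1, gm2, gm3, gm4, gm5, gm6, gm7, gm8, gm9, gm10, gm11, gm12, gm13, gm14]
  simp only [smul_fin_four', add_fin_four']
  norm_num [vecCons_eq_iff, Complex.ext_iff, Complex.real_smul]

set_option maxHeartbeats 4000000 in
theorem hcombB23 : GB23 = (((15265/4536) : ℝ)) • gm0 + (((-14617/4536) : ℝ)) • gm1 + (((697/864) : ℝ)) • gm2 + (((-89/336) : ℝ)) • gm3 + (((-293/1008) : ℝ)) • gm4 + (((55/288) : ℝ)) • gm5 + (((-31/576) : ℝ)) • gm6 + (((7/72) : ℝ)) • gm7 + (((-71/9072) : ℝ)) • gm8 + (((193/4536) : ℝ)) • gm9 + (((-11/2016) : ℝ)) • gm10 + (((-11/336) : ℝ)) • gm11 + (((-1/432) : ℝ)) • gm12 + (((31/1728) : ℝ)) • gm13 + (((-5/2016) : ℝ)) • gm14 := by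
  rw [GB23, gm0, gm1, gm2, gm3, gm4, gm5, gm6, gm7, gm8, gm9, gm10, gm11, gm12, gm13, gm14]
  simp only [smul_fin_four', add_fin_four']
  norm_num [vecCons_eq_iff, Complex.ext_iff, Complex.real_smul]

set_option maxHeartbeats 4000000 in
theorem hcombD0 : GD0 = (((-28799/5103) : ℝ)) • gm0 + (((69019/10206) : ℝ)) • gm1 + (((47/4536) : ℝ)) • gm3 + (((95/252) : ℝ)) • gm4 + (((1363/40824) : ℝ)) • gm8 + (((-1333/10206) : ℝ)) • gm9 + (((-1/2016) : ℝ)) • gm10 + (((-1/42) : ℝ)) • gm11 + (((113/18144) : ℝ)) • gm14 := by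
  rw [GD0, gm0, gm1, gm3, gm4, gm8, gm9, gm10, gm11, gm14]
  simp only [smul_fin_four', add_fin_four']
  norm_num [vecCons_eq_iff, Complex.ext_iff, Complex.real_smul]

set_option maxHeartbeats 4000000 in
theorem hcombD1 : GD1 = (((-2399/1458) : ℝ)) • gm0 + (((1321/729) : ℝ)) • gm1 + (((391/648) : ℝ)) • gm3 + (((1/3) : ℝ)) • gm4 + (((-25/1458) : ℝ)) • gm8 + (((25/1458) : ℝ)) • gm9 + (((1/96) : ℝ)) • gm10 + (((1/12) : ℝ)) • gm11 + (((1/2592) : ℝ)) • gm14 := by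
  rw [GD1, gm0, gm1, gm3, gm4, gm8, gm9, gm10, gm11, gm14]
  simp only [smul_fin_four', add_fin_four']
  norm_num [vecCons_eq_iff, Complex.ext_iff, Complex.real_smul]

set_option maxHeartbeats 4000000 in
theorem hcombD2 : GD2 = (((-289/2916) : ℝ)) • gm0 + (((775/2916) : ℝ)) • gm1 + (((37/162) : ℝ)) • gm3 + (((-1/24) : ℝ)) • gm4 + (((35/5832) : ℝ)) • gm8 + (((-35/5832) : ℝ)) • gm9 + (((1/96) : ℝ)) • gm10 + (((1/12) : ℝ)) • gm11 + (((1/2592) : ℝ)) • gm14 := by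
  rw [GD2, gm0, gm1, gm3, gm4, gm8, gm9, gm10, gm11, gm14]
  simp only [smul_fin_four', add_fin_four']
  norm_num [vecCons_eq_iff, Complex.ext_iff, Complex.real_smul]

set_option maxHeartbeats 4000000 in
set_option linter.unnecessarySeqFocus false in
theorem su4_decomp (A : Matrix (Fin 4) (Fin 4) ℂ) (h1 : Aᴴ = -A) (h2 : A.trace = 0) :
    A = (A 0 1).re • GA01
      + (A 0 1).im • GB01
      + (A 0 2).re • GA02
      + (A 0 2).im • GB02
      + (A 0 3).re • GA03
      + (A 0 3).im • GB03
      + (A 1 2).re • GA12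
      + (A 1 2).im • GB12
      + (A 1 3).re • GA13
      + (A 1 3).im • GB13
      + (A 2 3).re • GA23
      + (A 2 3).im • GB23
      + (A 0 0).im • GD0
      + (A 1 1).im • GD1
      + (A 2 2).im • GD2 := by
  have e : ∀ i j : Fin 4, (starRingEnd ℂ) (A j i) = -A i j := fun i j => by
    have := congrFun (congrFun h1 i) j
    simpa [Matrix.conjTranspose_apply] using this
  have hre : ∀ i j : Fin 4, (A j i).re = -(A i j).re := fun i j => by
    have := congrArg Complex.re (e i j); simpa using this
  have him : ∀ i j : Fin 4, (A j i).im = (A i j).im := fun i j => by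
    have := congrArg Complex.im (e i j); simpa using this
  have hre01 := hre 0 1
  have him01 := him 0 1
  have hre02 := hre 0 2
  have him02 := him 0 2
  have hre03 := hre 0 3
  have him03 := him 0 3
  have hre12 := hre 1 2
  have him12 := him 1 2
  have hre13 := hre 1 3
  have him13 := him 1 3
  have hre23 := hre 2 3
  have him23 := him 2 3
  have hd0 : (A 0 0).re = 0 := by have := hre 0 0; linarith
  have hd1 : (A 1 1).re = 0 := by have := hre 1 1; linarith
  have hd2 : (A 2 2).re = 0 := by have := hre 2 2; linarith
  have hd3 : (A 3 3).re = 0 := by have := hre 3 3; linarith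
  have htr : (A 3 3).im = -((A 0 0).im + (A 1 1).im + (A 2 2).im) := by
    have := congrArg Complex.im h2
    simp [Matrix.trace, Fin.sum_univ_four, Matrix.diag] at this
    linarith
  ext i j
  fin_cases i <;> fin_cases j <;>
    simp [GA01, GB01, GA02, GB02, GA03, GB03, GA12, GB12, GA13, GB13, GA23, GB23,
      GD0, GD1, GD2, Matrix.add_apply, Matrix.smul_apply, Complex.real_smul,
      Matrix.vecHead, Matrix.vecTail,
      Complex.ext_iff, hre01, him01, hre02, him02, hre03, him03, hre12, him12,
      hre13, him13, hre23, him23, hd0, hd1, hd2, hd3, htr] <;>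
    ring_nf

attribute [local instance 100] LieRing.ofAssociativeRing

/-- The Swap matrix on ℂ² ⊗ ℂ² ≅ ℂ⁴. -/
noncomputable def S : Matrix (Fin 4) (Fin 4) ℂ :=
  !![1,0,0,0; 0,0,1,0; 0,1,0,0; 0,0,0,1]

/-- su(4): traceless skew-Hermitian 4×4 complex matrices, as a real Lie algebra
(a Lie subalgebra of the 4×4 complex matrices with commutator bracket). -/
def su4 : LieSubalgebra ℝ (Matrix (Fin 4) (Fin 4) ℂ) where
  carrier := {A | Aᴴ = -A ∧ A.trace = 0}
  add_mem' := by
    rintro A B ⟨hA1, hA2⟩ ⟨hB1, hB2⟩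
    exact ⟨by rw [conjTranspose_add, hA1, hB1, neg_add], by rw [trace_add, hA2, hB2, add_zero]⟩
  zero_mem' := by
    exact ⟨by simp, by simp⟩
  smul_mem' := by
    rintro c A ⟨hA1, hA2⟩
    refine ⟨?_, ?_⟩
    · rw [conjTranspose_smul, hA1, star_trivial, smul_neg]
    · rw [trace_smul, hA2, smul_zero]
  lie_mem' := by
    rintro A B ⟨hA1, hA2⟩ ⟨hB1, hB2⟩
    refine ⟨?_, ?_⟩
    · simp only [Ring.lie_def, conjTranspose_sub, conjTranspose_mul, hA1, hB1,
        neg_mul, mul_neg, neg_neg, neg_sub]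
    · simp only [Ring.lie_def, trace_sub, trace_mul_comm A B, sub_self]


set_option maxHeartbeats 1000000 in
theorem hgm0_mem : gm0 ∈ su4 := by
  constructor
  · ext i j
    fin_cases i <;> fin_cases j <;>
      simp [gm0, Matrix.conjTranspose_apply, Matrix.vecHead, Matrix.vecTail,
        Complex.ext_iff]
  · rw [trace_fin_four']
    simp [gm0, Matrix.vecHead, Matrix.vecTail]

set_option maxHeartbeats 1000000 in
theorem hgm1_mem : gm1 ∈ su4 := by
  constructor
  · ext i j
    fin_cases i <;> fin_cases j <;>
      simp [gm1, Matrix.conjTranspose_apply, Matrix.vecHead, Matrix.vecTail,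
        Complex.ext_iff]
  · rw [trace_fin_four']
    simp [gm1, Matrix.vecHead, Matrix.vecTail]

set_option maxHeartbeats 1000000 in
theorem hSgm : S * gm0 * S = gm1 := by
  rw [S, gm0, gm1, mul_fin_four', mul_fin_four']
  norm_num [vecCons_eq_iff, Complex.ext_iff]

set_option maxHeartbeats 1000000 in
/-- there exists t ∈ su(4) such that t and t' = S t S generate su(4)
as a real Lie algebra. -/
theorem exists_generating_pair :
    ∃ t : Matrix (Fin 4) (Fin 4) ℂ, t ∈ su4 ∧
      LieSubalgebra.lieSpan ℝ (Matrix (Fin 4) (Fin 4) ℂ) {t, S * t * S} = su4 := by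
  refine ⟨gm0, hgm0_mem, ?_⟩
  set K := LieSubalgebra.lieSpan ℝ (Matrix (Fin 4) (Fin 4) ℂ) {gm0, S * gm0 * S} with hK
  apply le_antisymm
  · rw [LieSubalgebra.lieSpan_le]
    rintro x hx
    simp only [Set.mem_insert_iff, Set.mem_singleton_iff] at hx
    rcases hx with rfl | rfl
    · exact hgm0_mem
    · rw [hSgm]; exact hgm1_mem
  · intro A hA
    obtain ⟨h1, h2⟩ := hA
    have m0 : gm0 ∈ K := LieSubalgebra.subset_lieSpan (Set.mem_insert _ _)
    have m1 : gm1 ∈ K := by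
      rw [← hSgm]
      exact LieSubalgebra.subset_lieSpan (Set.mem_insert_of_mem _ rfl)
    have m2 : gm2 ∈ K := by rw [← hbr2]; exact K.lie_mem m0 m1
    have m3 : gm3 ∈ K := by rw [← hbr3]; exact K.lie_mem m0 m2
    have m4 : gm4 ∈ K := by rw [← hbr4]; exact K.lie_mem m1 m2
    have m5 : gm5 ∈ K := by rw [← hbr5]; exact K.lie_mem m0 m3
    have m6 : gm6 ∈ K := by rw [← hbr6]; exact K.lie_mem m0 m4
    have m7 : gm7 ∈ K := by rw [← hbr7]; exact K.lie_mem m1 m4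
    have m8 : gm8 ∈ K := by rw [← hbr8]; exact K.lie_mem m2 m3
    have m9 : gm9 ∈ K := by rw [← hbr9]; exact K.lie_mem m2 m4
    have m10 : gm10 ∈ K := by rw [← hbr10]; exact K.lie_mem m0 m5
    have m11 : gm11 ∈ K := by rw [← hbr11]; exact K.lie_mem m0 m6
    have m12 : gm12 ∈ K := by rw [← hbr12]; exact K.lie_mem m0 m8
    have m13 : gm13 ∈ K := by rw [← hbr13]; exact K.lie_mem m0 m9
    have m14 : gm14 ∈ K := by rw [← hbr14]; exact K.lie_mem m2 m8
    have gmemA01 : GA01 ∈ K := by rw [hcombA01]; exact (K.add_mem (K.add_mem (K.add_mem (K.add_mem (K.add_mem (K.add_mem (K.add_mem (K.smul_mem _ m0) (K.smul_mem _ m1)) (K.smul_mem _ m3)) (K.smul_mem _ m4)) (K.smul_mem _ m8)) (K.smul_mem _ m9)) (K.smul_mem _ m10)) (K.smul_mem _ m11))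
    have gmemB01 : GB01 ∈ K := by rw [hcombB01]; exact (K.add_mem (K.add_mem (K.add_mem (K.add_mem (K.add_mem (K.smul_mem _ m2) (K.smul_mem _ m5)) (K.smul_mem _ m6)) (K.smul_mem _ m7)) (K.smul_mem _ m12)) (K.smul_mem _ m13))
    have gmemA02 : GA02 ∈ K := by rw [hcombA02]; exact (K.add_mem (K.add_mem (K.add_mem (K.add_mem (K.add_mem (K.add_mem (K.add_mem (K.smul_mem _ m0) (K.smul_mem _ m1)) (K.smul_mem _ m3)) (K.smul_mem _ m4)) (K.smul_mem _ m8)) (K.smul_mem _ m9)) (K.smul_mem _ m10)) (K.smul_mem _ m11))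
    have gmemB02 : GB02 ∈ K := by rw [hcombB02]; exact (K.add_mem (K.add_mem (K.add_mem (K.add_mem (K.add_mem (K.smul_mem _ m2) (K.smul_mem _ m5)) (K.smul_mem _ m6)) (K.smul_mem _ m7)) (K.smul_mem _ m12)) (K.smul_mem _ m13))
    have gmemA03 : GA03 ∈ K := by rw [hcombA03]; exact (K.add_mem (K.add_mem (K.add_mem (K.add_mem (K.add_mem (K.add_mem (K.add_mem (K.add_mem (K.add_mem (K.add_mem (K.add_mem (K.add_mem (K.add_mem (K.add_mem (K.smul_mem _ m0) (K.smul_mem _ m1)) (K.smul_mem _ m2)) (K.smul_mem _ m3)) (K.smul_mem _ m4)) (K.smul_mem _ m5)) (K.smul_mem _ m6)) (K.smul_mem _ m7)) (K.smul_mem _ m8)) (K.smul_mem _ m9)) (K.smul_mem _ m10)) (K.smul_mem _ m11)) (K.smul_mem _ m12)) (K.smul_mem _ m13)) (K.smul_mem _ m14))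
    have gmemB03 : GB03 ∈ K := by rw [hcombB03]; exact (K.add_mem (K.add_mem (K.add_mem (K.add_mem (K.add_mem (K.add_mem (K.add_mem (K.add_mem (K.add_mem (K.add_mem (K.add_mem (K.add_mem (K.add_mem (K.add_mem (K.smul_mem _ m0) (K.smul_mem _ m1)) (K.smul_mem _ m2)) (K.smul_mem _ m3)) (K.smul_mem _ m4)) (K.smul_mem _ m5)) (K.smul_mem _ m6)) (K.smul_mem _ m7)) (K.smul_mem _ m8)) (K.smul_mem _ m9)) (K.smul_mem _ m10)) (K.smul_mem _ m11)) (K.smul_mem _ m12)) (K.smul_mem _ m13)) (K.smul_mem _ m14))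
    have gmemA12 : GA12 ∈ K := by rw [hcombA12]; exact (K.add_mem (K.add_mem (K.add_mem (K.smul_mem _ m2) (K.smul_mem _ m5)) (K.smul_mem _ m6)) (K.smul_mem _ m7))
    have gmemB12 : GB12 ∈ K := by rw [hcombB12]; exact (K.add_mem (K.add_mem (K.add_mem (K.add_mem (K.add_mem (K.add_mem (K.add_mem (K.add_mem (K.smul_mem _ m0) (K.smul_mem _ m1)) (K.smul_mem _ m3)) (K.smul_mem _ m4)) (K.smul_mem _ m8)) (K.smul_mem _ m9)) (K.smul_mem _ m10)) (K.smul_mem _ m11)) (K.smul_mem _ m14))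
    have gmemA13 : GA13 ∈ K := by rw [hcombA13]; exact (K.add_mem (K.add_mem (K.add_mem (K.add_mem (K.add_mem (K.add_mem (K.add_mem (K.add_mem (K.add_mem (K.add_mem (K.add_mem (K.add_mem (K.add_mem (K.add_mem (K.smul_mem _ m0) (K.smul_mem _ m1)) (K.smul_mem _ m2)) (K.smul_mem _ m3)) (K.smul_mem _ m4)) (K.smul_mem _ m5)) (K.smul_mem _ m6)) (K.smul_mem _ m7)) (K.smul_mem _ m8)) (K.smul_mem _ m9)) (K.smul_mem _ m10)) (K.smul_mem _ m11)) (K.smul_mem _ m12)) (K.smul_mem _ m13)) (K.smul_mem _ m14))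
    have gmemB13 : GB13 ∈ K := by rw [hcombB13]; exact (K.add_mem (K.add_mem (K.add_mem (K.add_mem (K.add_mem (K.add_mem (K.add_mem (K.add_mem (K.add_mem (K.add_mem (K.add_mem (K.add_mem (K.add_mem (K.add_mem (K.smul_mem _ m0) (K.smul_mem _ m1)) (K.smul_mem _ m2)) (K.smul_mem _ m3)) (K.smul_mem _ m4)) (K.smul_mem _ m5)) (K.smul_mem _ m6)) (K.smul_mem _ m7)) (K.smul_mem _ m8)) (K.smul_mem _ m9)) (K.smul_mem _ m10)) (K.smul_mem _ m11)) (K.smul_mem _ m12)) (K.smul_mem _ m13)) (K.smul_mem _ m14))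
    have gmemA23 : GA23 ∈ K := by rw [hcombA23]; exact (K.add_mem (K.add_mem (K.add_mem (K.add_mem (K.add_mem (K.add_mem (K.add_mem (K.add_mem (K.add_mem (K.add_mem (K.add_mem (K.add_mem (K.add_mem (K.add_mem (K.smul_mem _ m0) (K.smul_mem _ m1)) (K.smul_mem _ m2)) (K.smul_mem _ m3)) (K.smul_mem _ m4)) (K.smul_mem _ m5)) (K.smul_mem _ m6)) (K.smul_mem _ m7)) (K.smul_mem _ m8)) (K.smul_mem _ m9)) (K.smul_mem _ m10)) (K.smul_mem _ m11)) (K.smul_mem _ m12)) (K.smul_mem _ m13)) (K.smul_mem _ m14))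
    have gmemB23 : GB23 ∈ K := by rw [hcombB23]; exact (K.add_mem (K.add_mem (K.add_mem (K.add_mem (K.add_mem (K.add_mem (K.add_mem (K.add_mem (K.add_mem (K.add_mem (K.add_mem (K.add_mem (K.add_mem (K.add_mem (K.smul_mem _ m0) (K.smul_mem _ m1)) (K.smul_mem _ m2)) (K.smul_mem _ m3)) (K.smul_mem _ m4)) (K.smul_mem _ m5)) (K.smul_mem _ m6)) (K.smul_mem _ m7)) (K.smul_mem _ m8)) (K.smul_mem _ m9)) (K.smul_mem _ m10)) (K.smul_mem _ m11)) (K.smul_mem _ m12)) (K.smul_mem _ m13)) (K.smul_mem _ m14))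
    have gmemD0 : GD0 ∈ K := by rw [hcombD0]; exact (K.add_mem (K.add_mem (K.add_mem (K.add_mem (K.add_mem (K.add_mem (K.add_mem (K.add_mem (K.smul_mem _ m0) (K.smul_mem _ m1)) (K.smul_mem _ m3)) (K.smul_mem _ m4)) (K.smul_mem _ m8)) (K.smul_mem _ m9)) (K.smul_mem _ m10)) (K.smul_mem _ m11)) (K.smul_mem _ m14))
    have gmemD1 : GD1 ∈ K := by rw [hcombD1]; exact (K.add_mem (K.add_mem (K.add_mem (K.add_mem (K.add_mem (K.add_mem (K.add_mem (K.add_mem (K.smul_mem _ m0) (K.smul_mem _ m1)) (K.smul_mem _ m3)) (K.smul_mem _ m4)) (K.smul_mem _ m8)) (K.smul_mem _ m9)) (K.smul_mem _ m10)) (K.smul_mem _ m11)) (K.smul_mem _ m14))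
    have gmemD2 : GD2 ∈ K := by rw [hcombD2]; exact (K.add_mem (K.add_mem (K.add_mem (K.add_mem (K.add_mem (K.add_mem (K.add_mem (K.add_mem (K.smul_mem _ m0) (K.smul_mem _ m1)) (K.smul_mem _ m3)) (K.smul_mem _ m4)) (K.smul_mem _ m8)) (K.smul_mem _ m9)) (K.smul_mem _ m10)) (K.smul_mem _ m11)) (K.smul_mem _ m14))
    rw [su4_decomp A h1 h2]
    exact (K.add_mem (K.add_mem (K.add_mem (K.add_mem (K.add_mem (K.add_mem (K.add_mem (K.add_mem (K.add_mem (K.add_mem (K.add_mem (K.add_mem (K.add_mem (K.add_mem (K.smul_mem _ gmemA01) (K.smul_mem _ gmemB01)) (K.smul_mem _ gmemA02)) (K.smul_mem _ gmemB02)) (K.smul_mem _ gmemA03)) (K.smul_mem _ gmemB03)) (K.smul_mem _ gmemA12)) (K.smul_mem _ gmemB12)) (K.smul_mem _ gmemA13)) (K.smul_mem _ gmemB13)) (K.smul_mem _ gmemA23)) (K.smul_mem _ gmemB23)) (K.smul_mem _ gmemD0)) (K.smul_mem _ gmemD1)) (K.smul_mem _ gmemD2))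
end

section
/- Let G be a compact topological group, let φ : ℝ → G be a continuous group homomorphism from the additive reals (a one-parameter subgroup P = range φ), and let a < b be real numbers, so that I = φ([a,b]) is an interval of P. Then P is contained in the closure of the set ⋃_{k ∈ ℤ} {x^k : x ∈ I} = {φ(t)^k : t ∈ [a,b], k ∈ ℤ}; i.e. the union of all integer powers of I is dense in P (with its induced topology). -/
open Filter Set Topology

/-- In a compact group, 1 is in the closure of the positive powers of any element. -/
lemma one_mem_closure_pos_powers {G : Type*} [Group G] [TopologicalSpace G]
    [IsTopologicalGroup G] [CompactSpace G] (g : G) :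
    (1 : G) ∈ closure {x : G | ∃ n : ℕ, 1 ≤ n ∧ x = g ^ n} := by
  obtain ⟨x, -, hx⟩ : ∃ x ∈ (Set.univ : Set G), MapClusterPt x atTop (fun n : ℕ => g ^ n) :=
    isCompact_univ.exists_mapClusterPt (by simp)
  rw [mem_closure_iff_nhds]
  intro U hU
  have hcont : ContinuousAt (fun p : G × G => p.1⁻¹ * p.2) (x, x) :=
    ((continuous_fst.inv.mul continuous_snd)).continuousAt
  have h1 : (fun p : G × G => p.1⁻¹ * p.2) (x, x) = 1 := by simp
  have hpre : (fun p : G × G => p.1⁻¹ * p.2) ⁻¹' U ∈ 𝓝 (x, x) := hcont (h1 ▸ hU)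
  rw [mem_nhds_prod_iff] at hpre
  obtain ⟨V1, hV1, V2, hV2, hV⟩ := hpre
  have hfreq := (mapClusterPt_iff_frequently.mp hx) (V1 ∩ V2) (inter_mem hV1 hV2)
  obtain ⟨m, hmV, hm1⟩ := (hfreq.and_eventually (eventually_ge_atTop 1)).exists
  obtain ⟨n, hnV, hnm⟩ := (hfreq.and_eventually (eventually_gt_atTop m)).exists
  have hpow : g ^ (n - m) = (g ^ m)⁻¹ * g ^ n := by
    have : g ^ n = g ^ m * g ^ (n - m) := by
      rw [← pow_add]; congr 1; omega
    rw [this, inv_mul_cancel_left]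
  refine ⟨g ^ (n - m), ?_, n - m, by omega, rfl⟩
  rw [hpow]
  exact hV (Set.mk_mem_prod hmV.1 hnV.2)

/-- Covering lemma: for `0 < c < d`, every sufficiently large real is an integer
multiple of an element of `[c, d]`. -/
lemma exists_int_mul_mem_Icc {c d : ℝ} (hc : 0 < c) (hcd : c < d) {u : ℝ}
    (hu : max d (d * c / (d - c)) ≤ u) : ∃ k : ℤ, ∃ t ∈ Set.Icc c d, (k : ℝ) * t = u := by
  have hd : 0 < d := hc.trans hcd
  have hud : d ≤ u := le_trans (le_max_left _ _) hu
  have hu2 : d * c / (d - c) ≤ u := le_trans (le_max_right _ _) hu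
  have hu0 : 0 < u := hd.trans_le hud
  set k : ℤ := ⌈u / d⌉ with hk
  have hk1 : (1 : ℤ) ≤ k := Int.one_le_ceil_iff.mpr (div_pos hu0 hd)
  have hkpos : (0 : ℝ) < (k : ℝ) := by exact_mod_cast lt_of_lt_of_le zero_lt_one hk1
  refine ⟨k, u / k, ⟨?_, ?_⟩, by field_simp⟩
  · -- c ≤ u / k, i.e. k ≤ u / c
    rw [le_div_iff₀ hkpos]
    have hklt : (k : ℝ) < u / d + 1 := Int.ceil_lt_add_one _
    have h2 : u / d + 1 ≤ u / c := by
      rw [div_add' _ _ _ hd.ne', div_le_div_iff₀ hd hc]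
      have h1 : d * c ≤ u * (d - c) := by
        rw [← div_le_iff₀ (by linarith : (0:ℝ) < d - c)]
        exact hu2
      nlinarith
    have h3 : (k : ℝ) ≤ u / c := le_of_lt (lt_of_lt_of_le hklt h2)
    rw [le_div_iff₀ hc] at h3
    linarith
  · -- u / k ≤ d, i.e. u ≤ k * d
    rw [div_le_iff₀ hkpos]
    have h4 := Int.le_ceil (u / d)
    rw [← hk, div_le_iff₀ hd] at h4
    linarith

/-- let G be a compact Hausdorff topological group, φ : ℝ → G a continuous
homomorphism from the additive reals (so P = range φ is a one-parameter subgroup), and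
a < b reals, so I = φ([a,b]) is an interval of P. Then P is contained in the closure of
the union over k ∈ ℤ of the k-th power sets of I; i.e. ⋃ₖ Iᵏ is dense in P. -/
theorem powers_of_interval_dense_in_one_parameter_subgroup
    {G : Type*} [Group G] [TopologicalSpace G] [IsTopologicalGroup G]
    [CompactSpace G] [T2Space G]
    (φ : ℝ → G) (hcont : Continuous φ) (hhom : ∀ s t : ℝ, φ (s + t) = φ s * φ t)
    (a b : ℝ) (hab : a < b) :
    Set.range φ ⊆ closure {x : G | ∃ t ∈ Set.Icc a b, ∃ k : ℤ, x = φ t ^ k} := by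
  have hφ0 : φ 0 = 1 := by
    have h := hhom 0 0
    rw [add_zero] at h
    exact left_eq_mul.mp h
  have hφnat : ∀ (n : ℕ) (t : ℝ), φ ((n : ℝ) * t) = φ t ^ n := by
    intro n t
    induction n with
    | zero => simpa using hφ0
    | succ n ih => push_cast; rw [add_mul, one_mul, hhom, ih, pow_succ]
  have hφinv : ∀ t : ℝ, φ (-t) = (φ t)⁻¹ := by
    intro t
    have h : φ t * φ (-t) = 1 := by rw [← hhom]; simpa using hφ0
    exact (inv_eq_of_mul_eq_one_right h).symm
  have hφz : ∀ (k : ℤ) (t : ℝ), φ ((k : ℝ) * t) = φ t ^ k := by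
    intro k t
    cases k with
    | ofNat n => rw [Int.ofNat_eq_natCast, Int.cast_natCast, hφnat, zpow_natCast]
    | negSucc n =>
        have h : ((Int.negSucc n : ℤ) : ℝ) * t = -(((n + 1 : ℕ) : ℝ) * t) := by
          push_cast; ring
        rw [h, hφinv, hφnat, zpow_negSucc]
  -- covering: all sufficiently large reals are integer multiples of elements of [a,b]
  have key : ∃ r : ℝ, ∀ u : ℝ, r ≤ u → ∃ k : ℤ, ∃ t ∈ Set.Icc a b, (k : ℝ) * t = u := by
    by_cases hb : 0 < b
    · set c := max a (b / 2) with hc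
      have hc0 : 0 < c := lt_of_lt_of_le (half_pos hb) (le_max_right _ _)
      have hcb : c < b := max_lt hab (half_lt_self hb)
      refine ⟨max b (b * c / (b - c)), fun u hu => ?_⟩
      obtain ⟨k, t, ht, hkt⟩ := exists_int_mul_mem_Icc hc0 hcb hu
      exact ⟨k, t, ⟨le_trans (le_max_left _ _) ht.1, ht.2⟩, hkt⟩
    · push_neg at hb
      have ha : a < 0 := lt_of_lt_of_le hab hb
      set c := max (-b) (-a / 2) with hc
      have hc0 : 0 < c := lt_of_lt_of_le (by linarith) (le_max_right _ _)
      have hcd : c < -a := max_lt (by linarith) (by linarith)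
      refine ⟨max (-a) ((-a) * c / ((-a) - c)), fun u hu => ?_⟩
      obtain ⟨k, t, ht, hkt⟩ := exists_int_mul_mem_Icc hc0 hcd hu
      have h1 : -b ≤ t := le_trans (le_max_left _ _) ht.1
      refine ⟨-k, -t, ⟨by linarith [ht.2], by linarith⟩, by push_cast; linarith⟩
  obtain ⟨r, hr⟩ := key
  rintro _ ⟨s, rfl⟩
  set r' : ℝ := max (r - s) 1 with hr'
  have hr'pos : (0 : ℝ) < r' := lt_of_lt_of_le one_pos (le_max_right _ _)
  set g : G := φ r' with hg
  have hmem : ∀ n : ℕ, 1 ≤ n →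
      φ s * g ^ n ∈ {x : G | ∃ t ∈ Set.Icc a b, ∃ k : ℤ, x = φ t ^ k} := by
    intro n hn
    have hn1 : (1 : ℝ) ≤ (n : ℝ) := by exact_mod_cast hn
    have hineq : r ≤ s + (n : ℝ) * r' := by
      have h2 : r - s ≤ r' := le_max_left _ _
      nlinarith
    obtain ⟨k, t, ht, hkt⟩ := hr _ hineq
    refine ⟨t, ht, k, ?_⟩
    rw [← hφz, hkt, hhom, hφnat, hg]
  have hone := one_mem_closure_pos_powers g
  have himg : φ s ∈ closure
      ((Homeomorph.mulLeft (φ s)) '' {x : G | ∃ n : ℕ, 1 ≤ n ∧ x = g ^ n}) := by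
    rw [← (Homeomorph.mulLeft (φ s)).image_closure]
    exact ⟨1, hone, by simp⟩
  refine closure_mono ?_ himg
  rintro _ ⟨x, ⟨n, hn, rfl⟩, rfl⟩
  exact hmem n hn
end

section
/- Lines of irrational slope are dense in the d-torus: if θ₁, …, θ_d are real numbers that are linearly independent over ℚ, then the one-parameter subgroup {(tθ₁ mod 1, …, tθ_d mod 1) : t ∈ ℝ} is dense in the torus (ℝ/ℤ)^d. -/
open MeasureTheory Set Function Submodule Complex AddCircle
open scoped ENNReal NNReal

set_option maxHeartbeats 1000000
set_option synthInstance.maxHeartbeats 400000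

noncomputable section

variable {d : ℕ}

abbrev Torus (d : ℕ) := Fin d → AddCircle (1:ℝ)

noncomputable def torusChar (n : Fin d → ℤ) : C(Torus d, ℂ) :=
  ∏ i, (fourier (n i)).comp ⟨fun x => x i, continuous_apply i⟩

theorem torusChar_apply (n : Fin d → ℤ) (x : Torus d) :
    torusChar n x = ∏ i, fourier (n i) (x i) := by
  simp [torusChar]

theorem torusChar_zero : torusChar (0 : Fin d → ℤ) = 1 := by
  ext x; simp [torusChar_apply, fourier_zero]

theorem torusChar_mul (m n : Fin d → ℤ) :
    torusChar m * torusChar n = torusChar (m + n) := by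
  ext x
  simp only [ContinuousMap.mul_apply, torusChar_apply, ← Finset.prod_mul_distrib, Pi.add_apply]
  exact Finset.prod_congr rfl fun i _ => (fourier_add).symm

theorem torusChar_star (n : Fin d → ℤ) :
    star (torusChar n) = torusChar (-n) := by
  ext x
  simp only [ContinuousMap.star_apply, torusChar_apply, Pi.neg_apply, star_prod]
  exact Finset.prod_congr rfl fun i _ => (fourier_neg (n := n i)).symm

theorem torusChar_add_point (n : Fin d → ℤ) (x y : Torus d) :
    torusChar n (x + y) = torusChar n x * torusChar n y := by
  simp only [torusChar_apply, ← Finset.prod_mul_distrib, Pi.add_apply]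
  refine Finset.prod_congr rfl fun i _ => ?_
  simp only [fourier_apply, smul_add, AddCircle.toCircle_add, Circle.coe_mul]

theorem norm_torusChar (n : Fin d → ℤ) (x : Torus d) : ‖torusChar n x‖ = 1 := by
  simp only [torusChar_apply]
  rw [norm_prod]
  simp [fourier_apply, Circle.norm_coe]

/-- The star subalgebra generated by the torus characters. -/
noncomputable def torusSubalgebra (d : ℕ) : StarSubalgebra ℂ C(Torus d, ℂ) where
  toSubalgebra := Algebra.adjoin ℂ (range (torusChar (d := d)))
  star_mem' := by
    show Algebra.adjoin ℂ (range (torusChar (d := d))) ≤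
      star (Algebra.adjoin ℂ (range (torusChar (d := d))))
    refine Algebra.adjoin_le ?_
    rintro - ⟨n, rfl⟩
    exact Algebra.subset_adjoin ⟨-n, (torusChar_star n).symm ▸ rfl⟩

theorem torusSubalgebra_coe (d : ℕ) :
    Subalgebra.toSubmodule (torusSubalgebra d).toSubalgebra
      = span ℂ (range (torusChar (d := d))) := by
  apply Algebra.adjoin_eq_span_of_subset
  refine Subset.trans ?_ Submodule.subset_span
  intro x hx
  refine Submonoid.closure_induction (fun _ => id) ⟨0, torusChar_zero⟩ ?_ hx
  rintro - - - - ⟨m, rfl⟩ ⟨n, rfl⟩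
  exact ⟨m + n, (torusChar_mul m n).symm⟩

theorem torusSubalgebra_separatesPoints (d : ℕ) : (torusSubalgebra d).SeparatesPoints := by
  intro x y hxy
  obtain ⟨i, hi⟩ : ∃ i, x i ≠ y i := by
    by_contra h; push_neg at h; exact hxy (funext h)
  refine ⟨_, ⟨torusChar (Pi.single i 1), Algebra.subset_adjoin ⟨_, rfl⟩, rfl⟩, ?_⟩
  have key : ∀ z : Torus d, torusChar (Pi.single i 1) z = toCircle (z i) := by
    intro z
    rw [torusChar_apply, Finset.prod_eq_single i]
    · rw [Pi.single_eq_same, fourier_one]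
    · intro j _ hj
      rw [Pi.single_eq_of_ne hj, fourier_zero]
    · exact fun h => absurd (Finset.mem_univ i) h
  dsimp only
  rw [key, key]
  intro h
  rw [Circle.coe_inj] at h
  exact hi (injective_toCircle one_ne_zero h)

theorem torusSubalgebra_closure_eq_top (d : ℕ) :
    (torusSubalgebra d).topologicalClosure = ⊤ :=
  ContinuousMap.starSubalgebra_topologicalClosure_eq_top_of_separatesPoints _
    (torusSubalgebra_separatesPoints d)

theorem span_torusChar_closure_eq_top (d : ℕ) :
    (span ℂ (range (torusChar (d := d)))).topologicalClosure = ⊤ := by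
  rw [← torusSubalgebra_coe]
  exact congr_arg (Subalgebra.toSubmodule <| StarSubalgebra.toSubalgebra ·)
    (torusSubalgebra_closure_eq_top d)

theorem exists_torusChar_approx (f : C(Torus d, ℂ)) {ε : ℝ} (hε : 0 < ε) :
    ∃ P ∈ span ℂ (range (torusChar (d := d))), ‖f - P‖ < ε := by
  have h : f ∈ (span ℂ (range (torusChar (d := d)))).topologicalClosure := by
    rw [span_torusChar_closure_eq_top]; trivial
  have h2 : f ∈ closure ((span ℂ (range (torusChar (d := d)))) : Set C(Torus d, ℂ)) := h
  rw [Metric.mem_closure_iff] at h2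
  obtain ⟨P, hP, hd⟩ := h2 ε hε
  exact ⟨P, hP, by rwa [dist_eq_norm] at hd⟩

theorem closed_addSubgroup_eq_univ (d : ℕ) (S : AddSubgroup (Torus d))
    (hS : IsClosed (S : Set (Torus d)))
    (hnt : ∀ n : Fin d → ℤ, n ≠ 0 → ∃ s ∈ S, torusChar n (s : Torus d) ≠ 1) :
    (S : Set (Torus d)) = univ := by
  classical
  haveI : CompactSpace S := isCompact_iff_compactSpace.mp hS.isCompact
  letI : MeasurableSpace S := borel S
  haveI : BorelSpace S := ⟨rfl⟩
  let μ : Measure S := MeasureTheory.Measure.addHaar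
  haveI : IsFiniteMeasure μ := CompactSpace.isFiniteMeasure
  -- integrability of continuous functions pulled back to S
  have hint : ∀ (f : C(Torus d, ℂ)) (x : Torus d),
      Integrable (fun s : S => f (x + (s : Torus d))) μ := by
    intro f x
    have hc : Continuous (fun s : S => f (x + (s : Torus d))) :=
      f.continuous.comp (continuous_const.add continuous_subtype_val)
    exact hc.integrable_of_hasCompactSupport (isClosed_tsupport _).isCompact
  -- step 1 : nontrivial characters integrate to zero
  have key0 : ∀ n : Fin d → ℤ, n ≠ 0 → (∫ s : S, torusChar n (s : Torus d) ∂μ) = 0 := by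
    intro n hn
    obtain ⟨s₀, hs₀, hval⟩ := hnt n hn
    have inv := integral_add_left_eq_self (μ := μ)
      (f := fun s : S => torusChar n (s : Torus d)) ⟨s₀, hs₀⟩
    have : ∀ s : S, torusChar n (((⟨s₀, hs₀⟩ : S) + s : S) : Torus d)
        = torusChar n s₀ * torusChar n (s : Torus d) := by
      intro s
      rw [AddSubgroup.coe_add]
      exact torusChar_add_point n s₀ (s : Torus d)
    rw [funext this] at inv
    rw [integral_const_mul] at inv
    have h1 : (torusChar n s₀ - 1) * (∫ s : S, torusChar n (s : Torus d) ∂μ) = 0 := by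
      rw [sub_mul, one_mul, inv, sub_self]
    rcases mul_eq_zero.mp h1 with h | h
    · exact absurd (sub_eq_zero.mp h) hval
    · exact h
  -- step 2 : averages of characters do not depend on the base point
  have key1 : ∀ n : Fin d → ℤ, ∀ x y : Torus d,
      (∫ s : S, torusChar n (x + (s : Torus d)) ∂μ)
        = ∫ s : S, torusChar n (y + (s : Torus d)) ∂μ := by
    intro n x y
    by_cases hn : n = 0
    · subst hn; simp [torusChar_zero]
    · have hx : ∀ z : Torus d, (∫ s : S, torusChar n (z + (s : Torus d)) ∂μ) = 0 := by
        intro z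
        have : (fun s : S => torusChar n (z + (s : Torus d)))
            = fun s : S => torusChar n z * torusChar n (s : Torus d) :=
          funext fun s => torusChar_add_point n z (s : Torus d)
        rw [this, integral_const_mul, key0 n hn, mul_zero]
      rw [hx x, hx y]
  -- step 3 : averages of elements of the span do not depend on the base point
  have key2 : ∀ f ∈ span ℂ (range (torusChar (d := d))), ∀ x y : Torus d,
      (∫ s : S, f (x + (s : Torus d)) ∂μ) = ∫ s : S, f (y + (s : Torus d)) ∂μ := by
    intro f hf
    induction hf using Submodule.span_induction with
    | mem f hf => obtain ⟨n, rfl⟩ := hf; exact key1 n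
    | zero => intro x y; simp
    | add f g _ _ hf hg =>
        intro x y
        simp only [ContinuousMap.add_apply]
        rw [integral_add (hint f x) (hint g x), integral_add (hint f y) (hint g y),
          hf x y, hg x y]
    | smul c f _ hf =>
        intro x y
        simp only [ContinuousMap.smul_apply]
        rw [integral_smul, integral_smul, hf x y]
  -- step 4 : averages of arbitrary continuous functions do not depend on the base point
  have key3 : ∀ (f : C(Torus d, ℂ)) (x y : Torus d),
      (∫ s : S, f (x + (s : Torus d)) ∂μ) = ∫ s : S, f (y + (s : Torus d)) ∂μ := by
    intro f x y
    refine eq_of_forall_dist_le fun ε hε => ?_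
    set C : ℝ := (μ univ).toReal + 1 with hC
    have hCpos : 0 < C := by positivity
    obtain ⟨P, hP, hPf⟩ := exists_torusChar_approx f (show 0 < ε / (2 * C) by positivity)
    have bound : ∀ z : Torus d,
        dist (∫ s : S, f (z + (s : Torus d)) ∂μ) (∫ s : S, P (z + (s : Torus d)) ∂μ)
          ≤ ε / (2 * C) * (μ univ).toReal := by
      intro z
      rw [dist_eq_norm, ← integral_sub (hint f z) (hint P z)]
      refine norm_integral_le_of_norm_le_const ?_
      filter_upwards with s
      calc ‖f (z + (s : Torus d)) - P (z + (s : Torus d))‖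
          = ‖(f - P) (z + (s : Torus d))‖ := by simp
        _ ≤ ‖f - P‖ := ContinuousMap.norm_coe_le_norm _ _
        _ ≤ ε / (2 * C) := le_of_lt hPf
    have hμC : (μ univ).toReal ≤ C := by rw [hC]; linarith
    calc dist (∫ s : S, f (x + (s : Torus d)) ∂μ) (∫ s : S, f (y + (s : Torus d)) ∂μ)
        ≤ dist (∫ s : S, f (x + (s : Torus d)) ∂μ) (∫ s : S, P (x + (s : Torus d)) ∂μ)
          + dist (∫ s : S, P (x + (s : Torus d)) ∂μ) (∫ s : S, P (y + (s : Torus d)) ∂μ)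
          + dist (∫ s : S, P (y + (s : Torus d)) ∂μ) (∫ s : S, f (y + (s : Torus d)) ∂μ) :=
            dist_triangle4 _ _ _ _
      _ ≤ ε / (2 * C) * (μ univ).toReal + 0 + ε / (2 * C) * (μ univ).toReal := by
            have hm : dist (∫ s : S, P (x + (s : Torus d)) ∂μ)
                (∫ s : S, P (y + (s : Torus d)) ∂μ) = 0 := by
              rw [key2 P hP x y, dist_self]
            rw [hm, dist_comm (∫ s : S, P (y + (s : Torus d)) ∂μ)]
            exact add_le_add (add_le_add (bound x) le_rfl) (bound y)
      _ ≤ ε / (2 * C) * C + 0 + ε / (2 * C) * C := by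
            have h1 : 0 ≤ ε / (2 * C) := by positivity
            gcongr
      _ = ε := by field_simp; ring
  -- step 5 : conclusion via Urysohn
  by_contra hne
  obtain ⟨x₀, hx₀⟩ : ∃ x₀ : Torus d, x₀ ∉ S := by
    by_contra h; push_neg at h; exact hne (eq_univ_of_forall h)
  set K : Set (Torus d) := (fun s => x₀ + s) '' (S : Set (Torus d)) with hK
  have hKcomp : IsCompact K := hS.isCompact.image (continuous_const.add continuous_id)
  have h0K : (0 : Torus d) ∉ K := by
    rintro ⟨s, hs, h0⟩
    apply hx₀
    have : x₀ = -s := by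
      have := h0; rw [add_eq_zero_iff_eq_neg] at this; exact this
    rw [this]; exact neg_mem hs
  obtain ⟨f₀, hf₀K, hf₀0, hf₀Icc⟩ :=
    exists_continuous_zero_one_of_isCompact hKcomp (isClosed_singleton (x := (0 : Torus d)))
      (disjoint_singleton_right.mpr h0K)
  set g : C(Torus d, ℂ) :=
    (⟨Complex.ofReal, Complex.continuous_ofReal⟩ : C(ℝ, ℂ)).comp f₀ with hg
  have h1 : (∫ s : S, g (x₀ + (s : Torus d)) ∂μ) = 0 := by
    have : (fun s : S => g (x₀ + (s : Torus d))) = fun _ => 0 := by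
      funext s
      have : f₀ (x₀ + (s : Torus d)) = 0 := hf₀K ⟨(s : Torus d), s.2, rfl⟩
      simp [hg, this]
    rw [this, integral_const, smul_zero]
  have h2 : (∫ s : S, g ((0 : Torus d) + (s : Torus d)) ∂μ) ≠ 0 := by
    have heq : (fun s : S => g ((0 : Torus d) + (s : Torus d)))
        = fun s : S => (RCLike.ofReal (K := ℂ) (f₀ (s : Torus d))) := by
      funext s; simp [hg]
    rw [heq, integral_ofReal]
    rw [Ne, RCLike.ofReal_eq_zero]
    have hpos : 0 < ∫ s : S, f₀ (s : Torus d) ∂μ := by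
      have hcont : Continuous (fun s : S => f₀ (s : Torus d)) :=
        f₀.continuous.comp continuous_subtype_val
      have hintR : Integrable (fun s : S => f₀ (s : Torus d)) μ :=
        hcont.integrable_of_hasCompactSupport (isClosed_tsupport _).isCompact
      rw [integral_pos_iff_support_of_nonneg (fun s => (hf₀Icc _).1) hintR]
      have hU : IsOpen ((fun s : S => f₀ (s : Torus d)) ⁻¹' Ioi 0) :=
        (isOpen_Ioi).preimage hcont
      have hUsub : ((fun s : S => f₀ (s : Torus d)) ⁻¹' Ioi 0) ⊆ support fun s : S => f₀ (s : Torus d) :=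
        fun s hs => ne_of_gt hs
      have hmem : (⟨0, zero_mem S⟩ : S) ∈ (fun s : S => f₀ (s : Torus d)) ⁻¹' Ioi 0 := by
        have : f₀ (0 : Torus d) = 1 := hf₀0 rfl
        simp only [mem_preimage, mem_Ioi]
        rw [this]; norm_num
      calc (0 : ℝ≥0∞) < μ ((fun s : S => f₀ (s : Torus d)) ⁻¹' Ioi 0) :=
            hU.measure_pos μ ⟨_, hmem⟩
        _ ≤ μ (support fun s : S => f₀ (s : Torus d)) := measure_mono hUsub
    exact ne_of_gt hpos
  exact h2 ((key3 g 0 x₀).trans h1)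

end

/-- lines of irrational slope are dense in the d-torus: if θ₁,…,θ_d are real
numbers linearly independent over ℚ, then the one-parameter subgroup
{(tθ₁ mod 1, …, tθ_d mod 1) : t ∈ ℝ} is dense in (ℝ/ℤ)^d. -/
theorem line_dense_in_torus (d : ℕ) (θ : Fin d → ℝ) (hθ : LinearIndependent ℚ θ) :
    Dense (Set.range (fun t : ℝ => fun i : Fin d => ((t * θ i : ℝ) : AddCircle (1 : ℝ)))) := by
  classical
  set f : ℝ → Torus d := fun t => fun i => ((t * θ i : ℝ) : AddCircle (1:ℝ)) with hf
  let φ : ℝ →+ Torus d :=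
    { toFun := f
      map_zero' := by
        funext i
        show ((0 * θ i : ℝ) : AddCircle (1:ℝ)) = 0
        rw [zero_mul]; rfl
      map_add' := by
        intro a b
        funext i
        show (((a + b) * θ i : ℝ) : AddCircle (1:ℝ))
            = ((a * θ i : ℝ) : AddCircle (1:ℝ)) + ((b * θ i : ℝ) : AddCircle (1:ℝ))
        rw [add_mul]
        rfl }
  set S : AddSubgroup (Torus d) := φ.range.topologicalClosure with hSdef
  have hSc : (S : Set (Torus d)) = closure (Set.range f) := by
    rw [hSdef, AddSubgroup.topologicalClosure_coe, AddMonoidHom.coe_range]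
    rfl
  rw [dense_iff_closure_eq]
  by_cases H : ∀ n : Fin d → ℤ, n ≠ 0 → ∃ s ∈ S, torusChar n (s : Torus d) ≠ 1
  · rw [← hSc]
    exact closed_addSubgroup_eq_univ d S (AddSubgroup.isClosed_topologicalClosure _) H
  · exfalso
    push_neg at H
    obtain ⟨n, hn0, hn⟩ := H
    set lam : ℝ := ∑ i, (n i : ℝ) * θ i with hlam
    have hchar : ∀ t : ℝ, Complex.exp (2 * (Real.pi : ℂ) * Complex.I * (t : ℂ) * (lam : ℂ)) = 1 := by
      intro t
      have hmem : f t ∈ S := φ.range.le_topologicalClosure ⟨t, rfl⟩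
      have hval := hn (f t) hmem
      rw [torusChar_apply] at hval
      have hprod : ∏ i, fourier (n i) ((f t) i)
          = Complex.exp (2 * (Real.pi : ℂ) * Complex.I * (t : ℂ) * (lam : ℂ)) := by
        calc ∏ i, fourier (n i) ((f t) i)
            = ∏ i, Complex.exp (2 * (Real.pi : ℂ) * Complex.I * (n i : ℂ) * ((t * θ i : ℝ) : ℂ)) := by
              refine Finset.prod_congr rfl fun i _ => ?_
              have := fourier_coe_apply (T := 1) (n := n i) (x := t * θ i)
              rw [this]; norm_num
          _ = Complex.exp (∑ i, 2 * (Real.pi : ℂ) * Complex.I * (n i : ℂ) * ((t * θ i : ℝ) : ℂ)) :=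
              (Complex.exp_sum _ _).symm
          _ = Complex.exp (2 * (Real.pi : ℂ) * Complex.I * (t : ℂ) * (lam : ℂ)) := by
              congr 1
              rw [hlam]
              push_cast
              rw [Finset.mul_sum]
              exact Finset.sum_congr rfl fun i _ => by ring
      rw [← hprod]; exact hval
    have hlam0 : lam = 0 := by
      by_contra hne
      have := hchar (1 / (2 * lam))
      have hexp : (2 * (Real.pi : ℂ) * Complex.I * ((1 / (2 * lam) : ℝ) : ℂ) * (lam : ℂ))
          = (Real.pi : ℂ) * Complex.I := by
        have hlamC : (lam : ℂ) ≠ 0 := Complex.ofReal_ne_zero.mpr hne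
        push_cast
        field_simp
      rw [hexp, Complex.exp_pi_mul_I] at this
      norm_num at this
    have hq := Fintype.linearIndependent_iff.mp hθ (fun i => (n i : ℚ))
    have hzero : ∑ i, ((n i : ℚ) • θ i) = 0 := by
      have : ∀ i, ((n i : ℚ) • θ i) = (n i : ℝ) * θ i := by
        intro i
        rw [Rat.smul_def]
        push_cast
        ring
      rw [Finset.sum_congr rfl fun i _ => this i]
      rw [← hlam]; exact hlam0
    have hall := hq hzero
    apply hn0
    funext i
    have := hall i
    exact_mod_cast this
end
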